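/- arXiv:1909.07106 — 2 statements merged into one kernel-verified Lean document; each statement's English description precedes it below -/
import Mathlib

section
/- For b in (0,1] and every x in (1/2,1), there exists n ∈ ℕ such that f^n(x) ∈ (1/2 - b/4, 1/2], where f = f_{0,b}; in particular f^n(x) is a fixed point of f. -/
noncomputable def f0b (b x : ℝ) : ℝ :=
  if x ≤ 1/2 then x else x * (1 - b + b * x)

lemma f0b_step (b : ℝ) (hb1 : 0 < b) (hb2 : b ≤ 1) (y : ℝ) (hy1 : 1/2 < y) (hy2 : y < 1) :
    1/2 - b/4 < f0b b y ∧ f0b b y < 1 ∧ (1 + b/2) * (1 - y) ≤ 1 - f0b b y := by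
  have h : f0b b y = y * (1 - b + b * y) := if_neg (by linarith)
  rw [h]
  have h1 : (0:ℝ) < 1 - y := by linarith
  have h2 : (0:ℝ) < b * y := by nlinarith
  refine ⟨by nlinarith [sq_nonneg (y - 1/2)],
    by nlinarith [mul_pos h1 (by linarith : (0:ℝ) < 1 + b * y)],
    by nlinarith [mul_nonneg (mul_pos hb1 h1).le (by linarith : (0:ℝ) ≤ y - 1/2)]⟩

theorem stmt3 (b : ℝ) (hb : b ∈ Set.Ioc (0:ℝ) 1)
    (x : ℝ) (hx : x ∈ Set.Ioo (1/2 : ℝ) 1) :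
    ∃ n : ℕ, (f0b b)^[n] x ∈ Set.Ioc (1/2 - b/4) (1/2 : ℝ) ∧
      f0b b ((f0b b)^[n] x) = (f0b b)^[n] x := by
  obtain ⟨hb1, hb2⟩ := hb
  obtain ⟨hx1, hx2⟩ := hx
  have key : ∀ n : ℕ, (∀ k < n, 1/2 < (f0b b)^[k] x) →
      (f0b b)^[n] x < 1 ∧ (1 + b/2)^n * (1 - x) ≤ 1 - (f0b b)^[n] x := by
    intro n
    induction n with
    | zero => intro _; exact ⟨by simpa using hx2, by simp⟩
    | succ m ih =>
      intro h
      obtain ⟨h1, h2⟩ := ih (fun k hk => h k (Nat.lt_succ_of_lt hk))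
      have hy1 : 1/2 < (f0b b)^[m] x := h m (Nat.lt_succ_self m)
      obtain ⟨_, hlt, hineq⟩ := f0b_step b hb1 hb2 _ hy1 h1
      rw [Function.iterate_succ_apply']
      refine ⟨hlt, ?_⟩
      have hpos : (0:ℝ) < 1 + b/2 := by linarith
      calc (1 + b/2)^(m+1) * (1 - x) = (1 + b/2) * ((1 + b/2)^m * (1 - x)) := by ring
        _ ≤ (1 + b/2) * (1 - (f0b b)^[m] x) := by nlinarith
        _ ≤ 1 - f0b b ((f0b b)^[m] x) := hineq
  have hex : ∃ n : ℕ, (f0b b)^[n] x ≤ 1/2 := by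
    by_contra hc
    push_neg at hc
    obtain ⟨n, hn⟩ := pow_unbounded_of_one_lt ((1/2) / (1 - x)) (by linarith : (1:ℝ) < 1 + b/2)
    obtain ⟨_, h2⟩ := key n (fun k _ => hc k)
    have hx' : 0 < 1 - x := by linarith
    have : (1/2 : ℝ) < (1 + b/2)^n * (1 - x) := by
      rw [div_lt_iff₀ hx'] at hn; linarith
    have := hc n
    linarith
  classical
  have hnle : (f0b b)^[Nat.find hex] x ≤ 1/2 := Nat.find_spec hex
  have hmin : ∀ k < Nat.find hex, 1/2 < (f0b b)^[k] x := fun k hk =>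
    lt_of_not_ge (Nat.find_min hex hk)
  have hn0 : Nat.find hex ≠ 0 := by
    intro h0
    rw [h0] at hnle
    simp at hnle
    linarith
  obtain ⟨m, hm⟩ := Nat.exists_eq_succ_of_ne_zero hn0
  rw [hm] at hnle hmin
  have hy1 : 1/2 < (f0b b)^[m] x := hmin m (Nat.lt_succ_self m)
  have hy2 : (f0b b)^[m] x < 1 :=
    (key m (fun k hk => hmin k (Nat.lt_succ_of_lt hk))).1
  obtain ⟨hgt, _, _⟩ := f0b_step b hb1 hb2 _ hy1 hy2
  rw [Function.iterate_succ_apply'] at hnle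
  exact ⟨m + 1, by rw [Function.iterate_succ_apply']; exact ⟨hgt, hnle⟩,
    by rw [Function.iterate_succ_apply']; exact if_pos hnle⟩
end

section
/- Let a ∈ (0,1) and b ∈ (0,1] with a/(a+1) < b ≤ 4a/(4-a²). Then x₂ = (ab + 2b - √(ab(ab+4)))/(2ab) satisfies 0 < x₂ ≤ 1/2. -/
theorem stmt12 (a b : ℝ) (ha : a ∈ Set.Ioo (0:ℝ) 1) (hb : b ∈ Set.Ioc (0:ℝ) 1)
    (h1 : a / (a + 1) < b) (h2 : b ≤ 4 * a / (4 - a^2)) :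
    0 < (a * b + 2 * b - Real.sqrt (a * b * (a * b + 4))) / (2 * a * b) ∧
    (a * b + 2 * b - Real.sqrt (a * b * (a * b + 4))) / (2 * a * b) ≤ 1/2 := by
  obtain ⟨ha0, ha1⟩ := ha
  obtain ⟨hb0, hb1⟩ := hb
  have hab : 0 < a * b := mul_pos ha0 hb0
  have h4a : 0 < 4 - a^2 := by nlinarith
  have h1' : a < b * (a + 1) := by
    rw [div_lt_iff₀ (by linarith)] at h1; linarith
  have h2' : b * (4 - a^2) ≤ 4 * a := by
    rw [le_div_iff₀ h4a] at h2; linarith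
  set s := Real.sqrt (a * b * (a * b + 4)) with hs
  have hpos : 0 < a * b + 2 * b := by nlinarith
  have hlt : s < a * b + 2 * b := by
    rw [hs]
    have : a * b * (a * b + 4) < (a * b + 2 * b)^2 := by nlinarith
    calc Real.sqrt (a * b * (a * b + 4)) < Real.sqrt ((a * b + 2 * b)^2) :=
          Real.sqrt_lt_sqrt (by positivity) this
      _ = a * b + 2 * b := Real.sqrt_sq hpos.le
  have hge : 2 * b ≤ s := by
    rw [hs]
    calc 2 * b = Real.sqrt ((2 * b)^2) := (Real.sqrt_sq (by linarith)).symm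
      _ ≤ Real.sqrt (a * b * (a * b + 4)) := Real.sqrt_le_sqrt (by nlinarith)
  constructor
  · apply div_pos (by linarith) (by linarith)
  · rw [div_le_iff₀ (by linarith)]; linarith
end
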